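/- For the scalar plant with n_x = n_u = n_y = n_w = n_z = 1, A = B₁ = B₂ = C₁ = C₂ = D₁₂ = D₂₁ = 1 and D₁₁ = 0, the controllers K⁽¹⁾ = [[0, 2],[−2, −2]] and K⁽²⁾ = [[0, −2],[2, −2]] both belong to K_{3.33}, while their midpoint (1/2)(K⁽¹⁾ + K⁽²⁾) = [[0, 0],[0, −2]] is not stabilizing (its closed-loop matrix A_cl is not Hurwitz). Consequently the set K_{3.33} is not convex. -/

import Mathlib

open Matrix

noncomputable section

/-- Operator norm (largest singular value) of a complex matrix. -/
def matOpNorm {m n : ℕ} (M : Matrix (Fin m) (Fin n) ℂ) : ℝ :=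
  ‖(Matrix.toEuclideanLin M).toContinuousLinearMap‖

/-- A real square matrix is Hurwitz if all its eigenvalues (over ℂ) have negative real part. -/
def IsHurwitz {n : Type*} [Fintype n] [DecidableEq n] (M : Matrix n n ℝ) : Prop :=
  ∀ μ ∈ spectrum ℂ (M.map (Complex.ofReal ·)), μ.re < 0

/-- The plant data. -/
structure Plant (nx nu ny nw nz : ℕ) where
  A : Matrix (Fin nx) (Fin nx) ℝ
  B1 : Matrix (Fin nx) (Fin nw) ℝ
  B2 : Matrix (Fin nx) (Fin nu) ℝ
  C1 : Matrix (Fin nz) (Fin nx) ℝ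
  C2 : Matrix (Fin ny) (Fin nx) ℝ
  D11 : Matrix (Fin nz) (Fin nw) ℝ
  D12 : Matrix (Fin nz) (Fin nu) ℝ
  D21 : Matrix (Fin ny) (Fin nw) ℝ

namespace Plant

variable {nx nu ny nw nz : ℕ} (P : Plant nx nu ny nw nz)

/-- Closed-loop `A` matrix. -/
def Acl (K : Matrix (Fin nu ⊕ Fin nx) (Fin ny ⊕ Fin nx) ℝ) :
    Matrix (Fin nx ⊕ Fin nx) (Fin nx ⊕ Fin nx) ℝ :=
  fromBlocks (P.A + P.B2 * K.toBlocks₁₁ * P.C2) (P.B2 * K.toBlocks₁₂)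
    (K.toBlocks₂₁ * P.C2) K.toBlocks₂₂

/-- Closed-loop `B` matrix. -/
def Bcl (K : Matrix (Fin nu ⊕ Fin nx) (Fin ny ⊕ Fin nx) ℝ) :
    Matrix (Fin nx ⊕ Fin nx) (Fin nw) ℝ :=
  fromRows (P.B1 + P.B2 * K.toBlocks₁₁ * P.D21) (K.toBlocks₂₁ * P.D21)

/-- Closed-loop `C` matrix. -/
def Ccl (K : Matrix (Fin nu ⊕ Fin nx) (Fin ny ⊕ Fin nx) ℝ) :
    Matrix (Fin nz) (Fin nx ⊕ Fin nx) ℝ :=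
  fromCols (P.C1 + P.D12 * K.toBlocks₁₁ * P.C2) (P.D12 * K.toBlocks₁₂)

/-- Closed-loop `D` matrix. -/
def Dcl (K : Matrix (Fin nu ⊕ Fin nx) (Fin ny ⊕ Fin nx) ℝ) :
    Matrix (Fin nz) (Fin nw) ℝ :=
  P.D11 + P.D12 * K.toBlocks₁₁ * P.D21

/-- The set of stabilizing full-order dynamic output feedback controllers. -/
def Cstab : Set (Matrix (Fin nu ⊕ Fin nx) (Fin ny ⊕ Fin nx) ℝ) :=
  {K | IsHurwitz (P.Acl K)}

/-- Closed-loop transfer matrix at frequency `s = iω`. -/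
def transferAt (K : Matrix (Fin nu ⊕ Fin nx) (Fin ny ⊕ Fin nx) ℝ) (ω : ℝ) :
    Matrix (Fin nz) (Fin nw) ℂ :=
  (P.Ccl K).map (Complex.ofReal ·) *
    (((Complex.I * (ω : ℂ)) • (1 : Matrix (Fin nx ⊕ Fin nx) (Fin nx ⊕ Fin nx) ℂ)
        - (P.Acl K).map (Complex.ofReal ·))⁻¹) *
    (P.Bcl K).map (Complex.ofReal ·) + (P.Dcl K).map (Complex.ofReal ·)

/-- Closed-loop H∞ norm. -/
def hinfNorm (K : Matrix (Fin nu ⊕ Fin nx) (Fin ny ⊕ Fin nx) ℝ) : ℝ :=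
  ⨆ ω : ℝ, matOpNorm (P.transferAt K ω)

/-- The feasible set `K_γ`. -/
def Kset (γ : ℝ) : Set (Matrix (Fin nu ⊕ Fin nx) (Fin ny ⊕ Fin nx) ℝ) :=
  {K | K ∈ P.Cstab ∧ P.hinfNorm K < γ}

end Plant

/-- The similarity transformation `𝒯_T` on full-order controllers. -/
def simT {nx nu ny : ℕ} (T : Matrix (Fin nx) (Fin nx) ℝ)
    (K : Matrix (Fin nu ⊕ Fin nx) (Fin ny ⊕ Fin nx) ℝ) :
    Matrix (Fin nu ⊕ Fin nx) (Fin ny ⊕ Fin nx) ℝ :=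
  fromBlocks K.toBlocks₁₁ (K.toBlocks₁₂ * T⁻¹) (T * K.toBlocks₂₁) (T * K.toBlocks₂₂ * T⁻¹)

/-- The scalar example plant: `n_x = n_u = n_y = n_w = n_z = 1`,
`A = B₁ = B₂ = C₁ = C₂ = D₁₂ = D₂₁ = 1` and `D₁₁ = 0`. -/
def examplePlant : Plant 1 1 1 1 1 :=
  ⟨1, 1, 1, 1, 1, 0, 1, 1⟩

/-- The controller `K⁽¹⁾ = [[0, 2],[−2, −2]]`. -/
def Kone : Matrix (Fin 1 ⊕ Fin 1) (Fin 1 ⊕ Fin 1) ℝ :=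
  fromBlocks !![0] !![2] !![-2] !![-2]

/-- The controller `K⁽²⁾ = [[0, −2],[2, −2]]`. -/
def Ktwo : Matrix (Fin 1 ⊕ Fin 1) (Fin 1 ⊕ Fin 1) ℝ :=
  fromBlocks !![0] !![-2] !![2] !![-2]

/-! ### Auxiliary lemmas -/

lemma fb_ext' {α : Type*} {M N : Matrix (Fin 1 ⊕ Fin 1) (Fin 1 ⊕ Fin 1) α}
    (h11 : M (.inl 0) (.inl 0) = N (.inl 0) (.inl 0))
    (h12 : M (.inl 0) (.inr 0) = N (.inl 0) (.inr 0))
    (h21 : M (.inr 0) (.inl 0) = N (.inr 0) (.inl 0))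
    (h22 : M (.inr 0) (.inr 0) = N (.inr 0) (.inr 0)) : M = N := by
  ext i j
  rcases i with i | i <;> rcases j with j | j <;> fin_cases i <;> fin_cases j <;> assumption

lemma m1_ext' {α : Type*} {M N : Matrix (Fin 1) (Fin 1) α} (h : M 0 0 = N 0 0) : M = N := by
  ext i j; fin_cases i <;> fin_cases j <;> assumption

lemma row_ext' {α : Type*} {M N : Matrix (Fin 1) (Fin 1 ⊕ Fin 1) α}
    (h1 : M 0 (.inl 0) = N 0 (.inl 0)) (h2 : M 0 (.inr 0) = N 0 (.inr 0)) : M = N := by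
  ext i j
  rcases j with j | j <;> fin_cases i <;> fin_cases j <;> assumption

lemma col_ext' {α : Type*} {M N : Matrix (Fin 1 ⊕ Fin 1) (Fin 1) α}
    (h1 : M (.inl 0) 0 = N (.inl 0) 0) (h2 : M (.inr 0) 0 = N (.inr 0) 0) : M = N := by
  ext i j
  rcases i with i | i <;> fin_cases i <;> fin_cases j <;> assumption

lemma det_fb (a b c d : ℂ) : (fromBlocks !![a] !![b] !![c] !![d]).det = a * d - b * c := by
  rw [← Matrix.det_submatrix_equiv_self finSumFinEquiv.symm]
  have h : (fromBlocks !![a] !![b] !![c] !![d]).submatrix ⇑finSumFinEquiv.symm ⇑finSumFinEquiv.symm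
      = !![a, b; c, d] := by
    ext i j
    fin_cases i <;> fin_cases j <;> rfl
  rw [h, Matrix.det_fin_two_of]

lemma mem_spectrum_iff_det' {M : Matrix (Fin 1 ⊕ Fin 1) (Fin 1 ⊕ Fin 1) ℂ} (μ : ℂ) :
    μ ∈ spectrum ℂ M ↔ (μ • (1 : Matrix (Fin 1 ⊕ Fin 1) (Fin 1 ⊕ Fin 1) ℂ) - M).det = 0 := by
  rw [spectrum.mem_iff, Algebra.algebraMap_eq_smul_one,
    Matrix.isUnit_iff_isUnit_det, isUnit_iff_ne_zero, not_not]

lemma map_fb (a b c d : ℝ) :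
    (fromBlocks !![a] !![b] !![c] !![d]).map (Complex.ofReal ·)
      = fromBlocks !![(a:ℂ)] !![(b:ℂ)] !![(c:ℂ)] !![(d:ℂ)] := by
  apply fb_ext' <;> simp

lemma euclidean_norm_fin_one (v : EuclideanSpace ℂ (Fin 1)) : ‖v‖ = ‖v 0‖ := by
  rw [EuclideanSpace.norm_eq]
  simp [Fin.sum_univ_one, Real.sqrt_sq (norm_nonneg _)]

lemma matOpNorm_le_abs (M : Matrix (Fin 1) (Fin 1) ℂ) : matOpNorm M ≤ ‖M 0 0‖ := by
  apply ContinuousLinearMap.opNorm_le_bound _ (norm_nonneg _)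
  intro v
  have h1 : (Matrix.toEuclideanLin M).toContinuousLinearMap v = Matrix.toEuclideanLin M v := rfl
  rw [h1, euclidean_norm_fin_one, euclidean_norm_fin_one v, Matrix.toEuclideanLin_apply]
  have h2 : (M *ᵥ (WithLp.equiv 2 (Fin 1 → ℂ)) v) 0 = M 0 0 * v 0 := by
    simp [Matrix.mulVec, dotProduct, Fin.sum_univ_one]
  have h3 : ((WithLp.equiv 2 (Fin 1 → ℂ)).symm (M *ᵥ (WithLp.equiv 2 (Fin 1 → ℂ)) v)) 0
      = (M *ᵥ (WithLp.equiv 2 (Fin 1 → ℂ)) v) 0 := rfl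
  rw [show (WithLp.toLp 2 (M *ᵥ v.ofLp)).ofLp 0 = M 0 0 * v.ofLp 0 from h2, norm_mul]

lemma re_neg_of_root (μ : ℂ) (h : (μ - 1) * (μ + 2) + 4 = 0) : μ.re < 0 := by
  have h7 : (2*μ+1)^2 = -7 := by linear_combination 4*h
  have hre := congrArg Complex.re h7
  have him := congrArg Complex.im h7
  simp [pow_two, Complex.mul_re, Complex.mul_im, Complex.add_re, Complex.add_im] at hre him
  by_contra hc
  push_neg at hc
  nlinarith [hre, him, sq_nonneg μ.im, sq_nonneg (2*μ.re+1), sq_nonneg ((2*μ.re+1)*μ.im)]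

/-- Main computation: for `ε = ±1`, the controller `[[0,2ε],[-2ε,-2]]` lies in `K_{3.33}`. -/
lemma generic_mem (ε : ℝ) (hε : ε^2 = 1) :
    (fromBlocks !![0] !![2*ε] !![-(2*ε)] !![-2]) ∈ examplePlant.Kset 3.33 := by
  set K : Matrix (Fin 1 ⊕ Fin 1) (Fin 1 ⊕ Fin 1) ℝ :=
    fromBlocks !![0] !![2*ε] !![-(2*ε)] !![-2] with hK
  have he2 : (ε:ℂ)^2 = 1 := by
    have := congrArg (Complex.ofReal ·) hε
    push_cast at this
    simpa using this
  have hA : examplePlant.Acl K = fromBlocks !![1] !![2*ε] !![-(2*ε)] !![-2] := by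
    apply fb_ext' <;>
      simp [Plant.Acl, examplePlant, hK, Matrix.mul_apply, Fin.sum_univ_one, Matrix.one_apply]
  constructor
  · -- stabilizing
    intro μ hμ
    rw [hA, map_fb, mem_spectrum_iff_det'] at hμ
    have hM : μ • (1 : Matrix (Fin 1 ⊕ Fin 1) (Fin 1 ⊕ Fin 1) ℂ)
        - fromBlocks !![((1:ℝ):ℂ)] !![((2*ε:ℝ):ℂ)] !![((-(2*ε):ℝ):ℂ)] !![((-2:ℝ):ℂ)]
        = fromBlocks !![μ-1] !![-(2*(ε:ℂ))] !![2*(ε:ℂ)] !![μ+2] := by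
      apply fb_ext' <;> simp [Matrix.one_apply] <;> push_cast <;> ring
    rw [hM, det_fb] at hμ
    apply re_neg_of_root
    linear_combination hμ - 4*he2
  · -- norm bound
    have hsup : examplePlant.hinfNorm K ≤ 133/40 := by
      apply ciSup_le
      intro ω
      set s : ℂ := Complex.I * (ω:ℂ) with hs
      set d : ℂ := s^2 + s + 2 with hd_def
      have hsre : s.re = 0 := by simp [hs]
      have hsim : s.im = ω := by simp [hs]
      have hdre : d.re = 2 - ω^2 := by
        simp [hd_def, pow_two, Complex.add_re, Complex.mul_re, hsre, hsim]
        ring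
      have hdim : d.im = ω := by
        simp [hd_def, pow_two, Complex.add_im, Complex.mul_im, hsre, hsim]
      have hd : d ≠ 0 := by
        intro h0
        rw [Complex.ext_iff] at h0
        simp [hdre, hdim] at h0
        nlinarith [h0.1, h0.2]
      have hM : (Complex.I * (ω:ℂ)) • (1 : Matrix (Fin 1 ⊕ Fin 1) (Fin 1 ⊕ Fin 1) ℂ)
          - (examplePlant.Acl K).map (Complex.ofReal ·)
          = fromBlocks !![s-1] !![-(2*(ε:ℂ))] !![2*(ε:ℂ)] !![s+2] := by
        rw [hA, map_fb]
        apply fb_ext' <;> simp [Matrix.one_apply, hs] <;> push_cast <;> ring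
      have hinv : ((Complex.I * (ω:ℂ)) • (1 : Matrix (Fin 1 ⊕ Fin 1) (Fin 1 ⊕ Fin 1) ℂ)
          - (examplePlant.Acl K).map (Complex.ofReal ·))⁻¹
          = fromBlocks !![(s+2)/d] !![2*(ε:ℂ)/d] !![-(2*(ε:ℂ))/d] !![(s-1)/d] := by
        rw [hM]
        apply Matrix.inv_eq_right_inv
        rw [Matrix.fromBlocks_multiply, ← Matrix.fromBlocks_one]
        apply fb_ext' <;>
          simp [Matrix.mul_apply, Fin.sum_univ_one, Matrix.add_apply] <;>
          field_simp
        · linear_combination 4*he2 - hd_def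
        · ring
        · ring
        · linear_combination 4*he2 - hd_def
      have hC : (examplePlant.Ccl K).map (Complex.ofReal ·)
          = fromCols !![1] !![2*(ε:ℂ)] := by
        apply row_ext' <;>
          simp [Plant.Ccl, examplePlant, hK, Matrix.mul_apply, Fin.sum_univ_one,
            Matrix.map_apply, fromCols_apply_inl, fromCols_apply_inr] <;>
          push_cast <;> ring
      have hB : (examplePlant.Bcl K).map (Complex.ofReal ·)
          = fromRows !![1] !![-(2*(ε:ℂ))] := by
        apply col_ext' <;>
          simp [Plant.Bcl, examplePlant, hK, Matrix.mul_apply, Fin.sum_univ_one,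
            Matrix.map_apply, fromRows_apply_inl, fromRows_apply_inr] <;>
          push_cast <;> ring
      have hD : (examplePlant.Dcl K).map (Complex.ofReal ·) = 0 := by
        apply m1_ext'
        simp [Plant.Dcl, examplePlant, hK, Matrix.mul_apply, Fin.sum_univ_one, Matrix.map_apply]
      have hT : examplePlant.transferAt K ω = !![(-2 - 3*s)/d] := by
        unfold Plant.transferAt
        rw [hinv, hC, hB, hD, add_zero, fromCols_mul_fromBlocks, fromCols_mul_fromRows]
        apply m1_ext'
        simp [Matrix.mul_apply, Fin.sum_univ_one, Matrix.add_apply]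
        field_simp
        linear_combination (-4-4*s)*he2
      rw [hT]
      have hle := matOpNorm_le_abs !![(-2 - 3*s)/d]
      have hentry : (!![(-2 - 3*s)/d] : Matrix (Fin 1) (Fin 1) ℂ) 0 0 = (-2 - 3*s)/d := rfl
      rw [hentry] at hle
      refine le_trans hle ?_
      rw [norm_div, div_le_iff₀ (by simpa [norm_pos_iff] using hd)]
      have hnum : ‖(-2 - 3*s : ℂ)‖^2 = 4 + 9*ω^2 := by
        rw [Complex.sq_norm, Complex.normSq_apply]
        simp [Complex.sub_re, Complex.sub_im, Complex.mul_re, Complex.mul_im, hsre, hsim]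
        ring
      have hden : ‖d‖^2 = (2 - ω^2)^2 + ω^2 := by
        rw [Complex.sq_norm, Complex.normSq_apply, hdre, hdim]
        ring
      have key : ‖(-2 - 3*s : ℂ)‖^2 ≤ (133/40 * ‖d‖)^2 := by
        rw [hnum, mul_pow, hden]
        nlinarith [sq_nonneg (ω^2 - 67467/35378), sq_nonneg ω, sq_nonneg (ω^2-2)]
      calc ‖(-2 - 3*s : ℂ)‖ = Real.sqrt (‖(-2 - 3*s : ℂ)‖^2) :=
            (Real.sqrt_sq (norm_nonneg _)).symm
        _ ≤ Real.sqrt ((133/40 * ‖d‖)^2) := Real.sqrt_le_sqrt key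
        _ = 133/40 * ‖d‖ := Real.sqrt_sq (by positivity)
    refine lt_of_le_of_lt hsup ?_
    norm_num

/-- For the scalar plant, `K⁽¹⁾, K⁽²⁾ ∈ K_{3.33}`, while their midpoint
`[[0,0],[0,−2]]` is not stabilizing; consequently `K_{3.33}` is not convex. -/
theorem Kset_not_convex :
    Kone ∈ examplePlant.Kset 3.33 ∧ Ktwo ∈ examplePlant.Kset 3.33 ∧
    ((1 / 2 : ℝ) • (Kone + Ktwo) = fromBlocks !![0] !![0] !![0] !![-2]) ∧
    (1 / 2 : ℝ) • (Kone + Ktwo) ∉ examplePlant.Cstab ∧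
    ¬ Convex ℝ (examplePlant.Kset 3.33) := by
  have hK1 : Kone ∈ examplePlant.Kset 3.33 := by
    have h := generic_mem 1 (by norm_num)
    have hE : (fromBlocks !![0] !![2*(1:ℝ)] !![-(2*(1:ℝ))] !![-2]) = Kone := by
      apply fb_ext' <;> simp [Kone]
    rwa [hE] at h
  have hK2 : Ktwo ∈ examplePlant.Kset 3.33 := by
    have h := generic_mem (-1) (by norm_num)
    have hE : (fromBlocks !![0] !![2*(-1:ℝ)] !![-(2*(-1:ℝ))] !![-2]) = Ktwo := by
      apply fb_ext' <;> norm_num [Ktwo]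
    rwa [hE] at h
  have hmid : (1 / 2 : ℝ) • (Kone + Ktwo) = fromBlocks !![0] !![0] !![0] !![-2] := by
    apply fb_ext' <;> simp [Kone, Ktwo] <;> norm_num
  have hnot : (fromBlocks !![(0:ℝ)] !![0] !![0] !![-2]) ∉ examplePlant.Cstab := by
    intro hst
    have hA : examplePlant.Acl (fromBlocks !![(0:ℝ)] !![0] !![0] !![-2])
        = fromBlocks !![1] !![0] !![0] !![-2] := by
      apply fb_ext' <;>
        simp [Plant.Acl, examplePlant, Matrix.mul_apply, Fin.sum_univ_one, Matrix.one_apply]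
    have h1 : (1:ℂ) ∈ spectrum ℂ
        ((examplePlant.Acl (fromBlocks !![(0:ℝ)] !![0] !![0] !![-2])).map (Complex.ofReal ·)) := by
      rw [hA, map_fb, mem_spectrum_iff_det']
      have hMM : (1:ℂ) • (1 : Matrix (Fin 1 ⊕ Fin 1) (Fin 1 ⊕ Fin 1) ℂ)
          - fromBlocks !![((1:ℝ):ℂ)] !![((0:ℝ):ℂ)] !![((0:ℝ):ℂ)] !![((-2:ℝ):ℂ)]
          = fromBlocks !![0] !![0] !![0] !![3] := by
        apply fb_ext' <;> simp [Matrix.one_apply] <;> norm_num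
      rw [hMM, det_fb]
      ring
    have := hst 1 h1
    norm_num at this
  refine ⟨hK1, hK2, hmid, ?_, ?_⟩
  · rw [hmid]; exact hnot
  · intro hconv
    have hm := hconv hK1 hK2 (by norm_num) (by norm_num) (by norm_num : (1/2:ℝ) + 1/2 = 1)
    rw [← smul_add] at hm
    have := hm.1
    rw [hmid] at this
    exact hnot this
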